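/- For every x ∈ [0,1)^n, every index i, and every vector u ∈ ℝ^n with all components strictly positive, the Hessian quadratic form of the component F_i at x applied to u is strictly negative: ∑_{j=1}^n ∑_{k=1}^n u_j u_k · ∂²F_i/∂x_j∂x_k (x) < 0. -/

import Mathlib

open Filter Finset

/-- The MMCA map `F`. -/
noncomputable def F {n : ℕ} (R : Matrix (Fin n) (Fin n) ℝ) (β μ : ℝ) (x : Fin n → ℝ) :
    Fin n → ℝ :=
  fun i => 1 - (1 - (1 - μ) * x i) * ∏ j, (1 - β * R i j * x j)

/-- Irreducibility of a (nonnegative) square matrix. -/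
def MatIrred {n : ℕ} (R : Matrix (Fin n) (Fin n) ℝ) : Prop :=
  ∀ i j : Fin n, ∃ k : ℕ, 0 < k ∧ (R ^ k) i j ≠ 0

/-- Spectral radius of a real matrix, as the supremum of the absolute values of the
real spectrum (appropriate here since `R` is symmetric). -/
noncomputable def specRad {n : ℕ} (R : Matrix (Fin n) (Fin n) ℝ) : ℝ :=
  sSup {r : ℝ | ∃ z ∈ spectrum ℝ R, |z| = r}

lemma hasFDerivAt_prod_affine {n : ℕ} (d : Fin n → ℝ) (s : Finset (Fin n)) (y : Fin n → ℝ) :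
    HasFDerivAt (fun z : Fin n → ℝ => ∏ j ∈ s, (1 + d j * z j))
      (∑ j ∈ s, (∏ m ∈ s.erase j, (1 + d m * y m)) •
        (d j • (ContinuousLinearMap.proj j : (Fin n → ℝ) →L[ℝ] ℝ))) y :=
  HasFDerivAt.finset_prod (fun j _ =>
    (((ContinuousLinearMap.proj j : (Fin n → ℝ) →L[ℝ] ℝ).hasFDerivAt (x := y)).const_mul
      (d j)).const_add 1)

lemma eval_single {n : ℕ} (d c : Fin n → ℝ) (s : Finset (Fin n)) (k : Fin n) :
    (∑ j ∈ s, c j • (d j • (ContinuousLinearMap.proj j : (Fin n → ℝ) →L[ℝ] ℝ)))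
      (Pi.single k 1) = if k ∈ s then c k * d k else 0 := by
  simp only [ContinuousLinearMap.sum_apply, ContinuousLinearMap.smul_apply,
    ContinuousLinearMap.proj_apply, smul_eq_mul, Pi.single_apply, mul_ite, mul_one, mul_zero]
  simp [Finset.sum_ite_eq' s k (fun j => c j * d j), mul_assoc]

theorem hessian_strictly_negative (n : ℕ) (hn : 2 ≤ n) (R : Matrix (Fin n) (Fin n) ℝ)
    (hsymm : R.IsSymm) (hR : ∀ i j, R i j ∈ Set.Icc (0:ℝ) 1)
    (hdiag : ∀ i, R i i = 0) (hirr : MatIrred R)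
    (β μ : ℝ) (hβ : β ∈ Set.Ioo (0:ℝ) 1) (hμ : μ ∈ Set.Ioo (0:ℝ) 1)
    (x : Fin n → ℝ) (hx : ∀ i, x i ∈ Set.Ico (0:ℝ) 1) (i : Fin n)
    (u : Fin n → ℝ) (hu : ∀ j, 0 < u j) :
    ∑ j, ∑ k, u j * u k *
      fderiv ℝ (fun y => fderiv ℝ (fun z => F R β μ z i) y (Pi.single k 1)) x
        (Pi.single j 1) < 0 := by
  classical
  obtain ⟨hβ0, hβ1⟩ := hβ
  obtain ⟨hμ0, hμ1⟩ := hμ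
  set d : Fin n → ℝ := fun j => if j = i then -(1 - μ) else -(β * R i j) with hd
  -- rewrite F · i as 1 - product of affine factors
  have hF : (fun z : Fin n → ℝ => F R β μ z i) = fun z => 1 - ∏ j, (1 + d j * z j) := by
    funext z
    simp only [F]
    congr 1
    rw [← Finset.mul_prod_erase Finset.univ (fun j => 1 - β * R i j * z j) (Finset.mem_univ i),
      ← Finset.mul_prod_erase Finset.univ (fun j => 1 + d j * z j) (Finset.mem_univ i),
      Finset.prod_congr rfl (fun j hj => by
        have hji : j ≠ i := Finset.ne_of_mem_erase hj
        show (1 : ℝ) - β * R i j * z j = 1 + d j * z j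
        simp [hd, hji]; ring)]
    have hdi' : d i = -(1 - μ) := by simp [hd]
    rw [hdiag i, hdi']
    ring
  -- first derivative
  have hd1 : ∀ (k : Fin n) (y : Fin n → ℝ),
      fderiv ℝ (fun z => F R β μ z i) y (Pi.single k 1)
        = -(d k * ∏ m ∈ Finset.univ.erase k, (1 + d m * y m)) := by
    intro k y
    rw [hF]
    have h := (hasFDerivAt_const (1 : ℝ) y).fun_sub (hasFDerivAt_prod_affine d Finset.univ y)
    rw [h.fderiv, ContinuousLinearMap.sub_apply, ContinuousLinearMap.zero_apply,
      eval_single d (fun j => ∏ m ∈ Finset.univ.erase j, (1 + d m * y m)) Finset.univ k]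
    simp [mul_comm]
  -- second derivative
  have hd2 : ∀ j k : Fin n,
      fderiv ℝ (fun y => fderiv ℝ (fun z => F R β μ z i) y (Pi.single k 1)) x (Pi.single j 1)
        = if j = k then 0
          else -(d k * (d j * ∏ m ∈ (Finset.univ.erase k).erase j, (1 + d m * x m))) := by
    intro j k
    have heq : (fun y => fderiv ℝ (fun z => F R β μ z i) y (Pi.single k 1))
        = fun y => -(d k * ∏ m ∈ Finset.univ.erase k, (1 + d m * y m)) :=
      funext (fun y => hd1 k y)
    rw [heq]
    have h := (((hasFDerivAt_prod_affine d (Finset.univ.erase k) x).const_mul (d k)).fun_neg)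
    rw [h.fderiv, ContinuousLinearMap.neg_apply, ContinuousLinearMap.smul_apply,
      eval_single d (fun j => ∏ m ∈ ((Finset.univ.erase k).erase j), (1 + d m * x m))
        (Finset.univ.erase k) j]
    by_cases hjk : j = k
    · simp [hjk]
    · simp [hjk, Finset.mem_erase, smul_eq_mul]
      exact Or.inl (mul_comm _ _)
  -- basic bounds on d and the factors
  have hdle : ∀ j, d j ≤ 0 := by
    intro j
    by_cases hj : j = i <;> simp [hd, hj]
    · linarith
    · have := (hR i j).1; nlinarith
  have hdge : ∀ j, -1 ≤ d j := by
    intro j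
    by_cases hj : j = i <;> simp [hd, hj]
    · linarith
    · have h1 := (hR i j).1; have h2 := (hR i j).2; nlinarith
  have hfac : ∀ m, 0 < 1 + d m * x m := by
    intro m
    have h1 := hdge m
    have h2 := (hx m).1
    have h3 := (hx m).2
    have h4 := hdle m
    nlinarith
  have hQpos : ∀ j k : Fin n, 0 < ∏ m ∈ (Finset.univ.erase k).erase j, (1 + d m * x m) :=
    fun j k => Finset.prod_pos (fun m _ => hfac m)
  -- find a nonzero entry in row i
  obtain ⟨j₀, hj₀⟩ : ∃ j, R i j ≠ 0 := by
    by_contra h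
    push_neg at h
    obtain ⟨k, hkpos, hkne⟩ := hirr i i
    obtain ⟨m, rfl⟩ := Nat.exists_eq_succ_of_ne_zero (Nat.pos_iff_ne_zero.mp hkpos)
    apply hkne
    rw [pow_succ']
    simp [Matrix.mul_apply, h]
  have hj₀i : j₀ ≠ i := fun h => hj₀ (h ▸ hdiag i)
  have hdi : d i < 0 := by simp [hd]; linarith
  have hdj₀ : d j₀ < 0 := by
    have h1 := (hR i j₀).1
    have h2 : 0 < R i j₀ := lt_of_le_of_ne h1 (Ne.symm hj₀)
    simp [hd, hj₀i]
    positivity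
  -- rewrite the goal
  simp only [hd2]
  -- each term is nonpositive
  have hterm : ∀ j k : Fin n, u j * u k *
      (if j = k then 0
        else -(d k * (d j * ∏ m ∈ (Finset.univ.erase k).erase j, (1 + d m * x m)))) ≤ 0 := by
    intro j k
    by_cases hjk : j = k
    · simp [hjk]
    · simp only [hjk, if_false]
      have h1 : 0 ≤ d k * d j := by nlinarith [hdle k, hdle j]
      have h2 := hQpos j k
      have h3 := (hu j).le
      have h4 := (hu k).le
      have hA : 0 ≤ d k * (d j * ∏ m ∈ (Finset.univ.erase k).erase j, (1 + d m * x m)) := by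
        rw [← mul_assoc]; exact mul_nonneg h1 h2.le
      nlinarith [mul_nonneg (mul_nonneg h3 h4) hA]
  -- the (i, j₀) term is strictly negative
  have hstrict : u i * u j₀ *
      (if i = j₀ then 0
        else -(d j₀ * (d i * ∏ m ∈ (Finset.univ.erase j₀).erase i, (1 + d m * x m)))) < 0 := by
    have hne : i ≠ j₀ := fun h => hj₀i h.symm
    simp only [hne, if_false]
    have h1 : 0 < d j₀ * d i := mul_pos_of_neg_of_neg hdj₀ hdi
    have h2 := hQpos i j₀
    have h3 := hu i
    have h4 := hu j₀
    have hA : 0 < d j₀ * (d i * ∏ m ∈ (Finset.univ.erase j₀).erase i, (1 + d m * x m)) := by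
      rw [← mul_assoc]; exact mul_pos h1 h2
    nlinarith [mul_pos (mul_pos h3 h4) hA]
  calc (∑ j, ∑ k, u j * u k *
      (if j = k then 0
        else -(d k * (d j * ∏ m ∈ (Finset.univ.erase k).erase j, (1 + d m * x m)))))
      < ∑ _j : Fin n, (0 : ℝ) := by
        refine Finset.sum_lt_sum (fun j _ => Finset.sum_nonpos (fun k _ => hterm j k))
          ⟨i, Finset.mem_univ i, ?_⟩
        calc (∑ k, u i * u k *
            (if i = k then 0
              else -(d k * (d i * ∏ m ∈ (Finset.univ.erase k).erase i, (1 + d m * x m)))))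
            < ∑ _k : Fin n, (0 : ℝ) :=
              Finset.sum_lt_sum (fun k _ => hterm i k) ⟨j₀, Finset.mem_univ j₀, hstrict⟩
          _ = 0 := by simp
    _ = 0 := by simp
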